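/- In a uniformly sampled layered subgraph 𝒢_S (where each vertex of 𝒢(G,t) independently keeps exactly one uniformly random outgoing edge), for any vertex α ∈ 𝒱₁*, the expected number of paths starting from other vertices of 𝒱₁* that intersect the unique path P_α at some layer is at most 1/2; hence with probability at least 1/2, P_α is vertex-disjoint from all paths P_β with β ≠ α ∈ 𝒱₁*. -/

import Mathlib

/-- The unique path, started at `start` in the first layer, in a sampled layered
subgraph: `σ v i j` gives the (vertex, copy) endpoint of the single retained outgoing
edge of the `i`-th copy of vertex `v` in layer `j`. -/
def layeredWalk {n t : ℕ} (ht : 0 < t)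
    (σ : Fin n → Fin (2 * t) → Fin t → Fin n × Fin (2 * t))
    (start : Fin n × Fin (2 * t)) : ℕ → Fin n × Fin (2 * t)
  | 0 => start
  | k + 1 =>
      σ (layeredWalk ht σ start k).1 (layeredWalk ht σ start k).2
        ⟨k % t, Nat.mod_lt _ ht⟩

/-- Sampled layered subgraphs of the layered graph of `G`: each vertex keeps exactly
one outgoing edge, recorded by `σ`, whose head must be a copy of a `G`-neighbor. -/
abbrev SampledLayered {n : ℕ} (G : SimpleGraph (Fin n)) [DecidableRel G.Adj] (t : ℕ) :=
  {σ : Fin n → Fin (2 * t) → Fin t → Fin n × Fin (2 * t) //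
    ∀ v i j, G.Adj v (σ v i j).1}

namespace SLP

abbrev LV (n t : ℕ) := Fin n × Fin (2 * t)
abbrev Sig (n t : ℕ) := Fin n → Fin (2 * t) → Fin t → LV n t

variable {n Δ t : ℕ}

def lvalid (G : SimpleGraph (Fin n)) [DecidableRel G.Adj] (σ : Sig n t) : Prop :=
  ∀ v i j, G.Adj v (σ v i j).1

instance (G : SimpleGraph (Fin n)) [DecidableRel G.Adj] :
    DecidablePred (lvalid (t := t) G) := fun _ => by
  unfold lvalid; infer_instance

def upd (σ : Sig n t) (v₀ : Fin n) (i₀ : Fin (2 * t)) (j₀ : Fin t) (x : LV n t) :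
    Sig n t :=
  fun v i j => if v = v₀ ∧ i = i₀ ∧ j = j₀ then x else σ v i j

lemma upd_same (σ : Sig n t) (v₀ i₀ j₀) (x : LV n t) :
    upd σ v₀ i₀ j₀ x v₀ i₀ j₀ = x := by simp [upd]

lemma upd_other (σ : Sig n t) (v₀ i₀ j₀) (x : LV n t) {v i j}
    (h : ¬(v = v₀ ∧ i = i₀ ∧ j = j₀)) : upd σ v₀ i₀ j₀ x v i j = σ v i j := by
  simp [upd, h]

lemma upd_upd (σ : Sig n t) (v₀ i₀ j₀) (x y : LV n t) :
    upd (upd σ v₀ i₀ j₀ x) v₀ i₀ j₀ y = upd σ v₀ i₀ j₀ y := by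
  funext v i j
  by_cases h : v = v₀ ∧ i = i₀ ∧ j = j₀
  · obtain ⟨rfl, rfl, rfl⟩ := h; simp [upd]
  · simp [upd, h]

lemma upd_self (σ : Sig n t) (v₀ i₀ j₀) :
    upd σ v₀ i₀ j₀ (σ v₀ i₀ j₀) = σ := by
  funext v i j
  by_cases h : v = v₀ ∧ i = i₀ ∧ j = j₀
  · obtain ⟨rfl, rfl, rfl⟩ := h; simp [upd]
  · simp [upd, h]

lemma lvalid_upd {G : SimpleGraph (Fin n)} [DecidableRel G.Adj] {σ : Sig n t}
    (hσ : lvalid G σ) {v₀ i₀ j₀} {x : LV n t} (hx : G.Adj v₀ x.1) :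
    lvalid G (upd σ v₀ i₀ j₀ x) := by
  intro v i j
  by_cases h : v = v₀ ∧ i = i₀ ∧ j = j₀
  · obtain ⟨rfl, rfl, rfl⟩ := h; rw [upd_same]; exact hx
  · rw [upd_other _ _ _ _ _ h]; exact hσ v i j

lemma card_nbr (G : SimpleGraph (Fin n)) [DecidableRel G.Adj]
    (hreg : G.IsRegularOfDegree Δ) (v : Fin n) :
    Fintype.card {y : LV n t // G.Adj v y.1} = Δ * (2 * t) := by
  have e : {y : LV n t // G.Adj v y.1} ≃ {a : Fin n // G.Adj v a} × Fin (2 * t) :=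
    { toFun := fun y => (⟨y.1.1, y.2⟩, y.1.2)
      invFun := fun p => ⟨(p.1.1, p.2), p.1.2⟩
      left_inv := fun y => by cases y with | mk y h => cases y; rfl
      right_inv := fun p => by cases p with | mk a b => cases a; rfl }
  rw [Fintype.card_congr e, Fintype.card_prod, Fintype.card_fin]
  congr 1
  rw [Fintype.card_subtype, ← SimpleGraph.neighborFinset_eq_filter]
  exact hreg v

section Pin

variable {G : SimpleGraph (Fin n)} [DecidableRel G.Adj]

lemma pin1 (hreg : G.IsRegularOfDegree Δ) (P : Sig n t → Prop) [DecidablePred P]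
    (v₀ : Fin n) (i₀ : Fin (2 * t)) (j₀ : Fin t)
    (hP : ∀ σ x, P (upd σ v₀ i₀ j₀ x) ↔ P σ)
    (x : LV n t) (hx : G.Adj v₀ x.1) :
    Δ * (2 * t) * Fintype.card {σ : Sig n t // lvalid G σ ∧ P σ ∧ σ v₀ i₀ j₀ = x}
      = Fintype.card {σ : Sig n t // lvalid G σ ∧ P σ} := by
  have e : {σ : Sig n t // lvalid G σ ∧ P σ} ≃
      {σ : Sig n t // lvalid G σ ∧ P σ ∧ σ v₀ i₀ j₀ = x} × {y : LV n t // G.Adj v₀ y.1} :=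
    { toFun := fun σ =>
        (⟨upd σ.1 v₀ i₀ j₀ x,
          lvalid_upd σ.2.1 hx, (hP σ.1 x).mpr σ.2.2, upd_same _ _ _ _ _⟩,
         ⟨σ.1 v₀ i₀ j₀, σ.2.1 v₀ i₀ j₀⟩)
      invFun := fun p =>
        ⟨upd p.1.1 v₀ i₀ j₀ p.2.1,
          lvalid_upd p.1.2.1 p.2.2, (hP p.1.1 p.2.1).mpr p.1.2.2.1⟩
      left_inv := fun σ => by
        apply Subtype.ext
        simp only [upd_upd, upd_self]
      right_inv := fun p => by
        refine Prod.ext (Subtype.ext ?_) (Subtype.ext ?_)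
        · simp only [upd_upd]
          have h := p.1.2.2.2
          calc upd (↑p.1) v₀ i₀ j₀ x = upd (↑p.1) v₀ i₀ j₀ ((p.1 : Sig n t) v₀ i₀ j₀) := by rw [h]
            _ = ↑p.1 := upd_self _ _ _ _
        · simp only [upd_same] }
  rw [Fintype.card_congr e, Fintype.card_prod, card_nbr G hreg]
  ring

lemma pin_empty (P : Sig n t → Prop) [DecidablePred P]
    (v₀ : Fin n) (i₀ : Fin (2 * t)) (j₀ : Fin t)
    (x : LV n t) (hx : ¬ G.Adj v₀ x.1) :
    Fintype.card {σ : Sig n t // lvalid G σ ∧ P σ ∧ σ v₀ i₀ j₀ = x} = 0 := by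
  rw [Fintype.card_eq_zero_iff]
  refine ⟨fun σ => ?_⟩
  exact hx (σ.2.2.2 ▸ σ.2.1 v₀ i₀ j₀)

/-- Combined pin lemma with an indicator. -/
lemma pin1' (hreg : G.IsRegularOfDegree Δ) (P : Sig n t → Prop) [DecidablePred P]
    (v₀ : Fin n) (i₀ : Fin (2 * t)) (j₀ : Fin t)
    (hP : ∀ σ x, P (upd σ v₀ i₀ j₀ x) ↔ P σ) (x : LV n t) :
    Δ * (2 * t) * Fintype.card {σ : Sig n t // lvalid G σ ∧ P σ ∧ σ v₀ i₀ j₀ = x}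
      = (if G.Adj v₀ x.1 then 1 else 0) * Fintype.card {σ : Sig n t // lvalid G σ ∧ P σ} := by
  by_cases hx : G.Adj v₀ x.1
  · rw [if_pos hx, one_mul]; exact pin1 hreg P v₀ i₀ j₀ hP x hx
  · rw [if_neg hx, zero_mul, pin_empty P v₀ i₀ j₀ x hx, mul_zero]

/-- Fiberwise decomposition of a count. -/
lemma fiber_decomp {β : Type*} [Fintype β] [DecidableEq β]
    (Q : Sig n t → Prop) [DecidablePred Q] (f : Sig n t → β) :
    Fintype.card {σ : Sig n t // Q σ}
      = ∑ b : β, Fintype.card {σ : Sig n t // Q σ ∧ f σ = b} := by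
  classical
  simp only [Fintype.card_subtype]
  rw [Finset.card_eq_sum_card_fiberwise (fun x _ => Finset.mem_univ (f x))]
  congr 1
  funext b
  rw [Finset.filter_filter]

end Pin

section Walk

variable (ht : 0 < t)

lemma walk_congr {σ σ' : Sig n t} {m : ℕ} (hm : m ≤ t)
    (h : ∀ v i (j : Fin t), (j : ℕ) < m → σ v i j = σ' v i j) (s : LV n t) :
    ∀ l, l ≤ m → layeredWalk ht σ s l = layeredWalk ht σ' s l := by
  intro l
  induction l with
  | zero => intro _; rfl
  | succ l ih =>
    intro hl
    have h1 : layeredWalk ht σ s l = layeredWalk ht σ' s l := ih (by omega)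
    show σ (layeredWalk ht σ s l).1 (layeredWalk ht σ s l).2 ⟨l % t, Nat.mod_lt _ ht⟩
      = σ' (layeredWalk ht σ' s l).1 (layeredWalk ht σ' s l).2 ⟨l % t, Nat.mod_lt _ ht⟩
    rw [h1]
    apply h
    show l % t < m
    have : l % t = l := Nat.mod_eq_of_lt (by omega)
    omega

lemma walk_upd (σ : Sig n t) (v₀ : Fin n) (i₀ : Fin (2 * t)) (j₀ : Fin t)
    (x : LV n t) {m : ℕ} (hm : m ≤ (j₀ : ℕ)) (s : LV n t) (l : ℕ) (hl : l ≤ m) :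
    layeredWalk ht (upd σ v₀ i₀ j₀ x) s l = layeredWalk ht σ s l := by
  refine walk_congr ht (by omega) (fun v i j hj => ?_) s l hl
  apply upd_other
  rintro ⟨-, -, rfl⟩
  omega

end Walk

section Count

def z0 (ht : 0 < t) : Fin (2 * t) := ⟨0, by omega⟩

variable (ht : 0 < t) (G : SimpleGraph (Fin n)) [DecidableRel G.Adj]

/-- Number of valid samples. -/
def cardOm (G : SimpleGraph (Fin n)) [DecidableRel G.Adj] (t : ℕ) : ℕ :=
  Fintype.card {σ : Sig n t // lvalid G σ}

/-- Count of samples where the walk from `u` is at `b` at step `k`. -/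
def cntU (u : Fin n) (k : ℕ) (b : LV n t) : ℕ :=
  Fintype.card {σ : Sig n t // lvalid G σ ∧ layeredWalk ht σ (u, z0 ht) k = b}

/-- Count of samples where the walks from `w` and `u` are at `a`, `b` at step `k`. -/
def cnt2 (u w : Fin n) (k : ℕ) (a b : LV n t) : ℕ :=
  Fintype.card {σ : Sig n t // lvalid G σ ∧
    (layeredWalk ht σ (w, z0 ht) k, layeredWalk ht σ (u, z0 ht) k) = (a, b)}

lemma lw_succ (σ : Sig n t) (s : LV n t) {k : ℕ} (hk : k < t) :
    layeredWalk ht σ s (k+1)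
      = σ (layeredWalk ht σ s k).1 (layeredWalk ht σ s k).2 ⟨k, hk⟩ := by
  have h : (⟨k % t, Nat.mod_lt k ht⟩ : Fin t) = ⟨k, hk⟩ :=
    Fin.ext (Nat.mod_eq_of_lt hk)
  conv_lhs => rw [layeredWalk]
  rw [h]

lemma sum_cntU (u : Fin n) (k : ℕ) :
    ∑ b : LV n t, cntU ht G u k b = cardOm G t :=
  (fiber_decomp (lvalid G) (fun σ => layeredWalk ht σ (u, z0 ht) k)).symm

lemma cntU_zero (u : Fin n) (b : LV n t) :
    cntU ht G u 0 b = if b = (u, z0 ht) then cardOm G t else 0 := by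
  unfold cntU cardOm
  by_cases hb : b = (u, z0 ht)
  · rw [if_pos hb]
    apply Fintype.card_congr
    apply Equiv.subtypeEquivRight
    intro σ
    simp [layeredWalk, hb]
  · rw [if_neg hb]
    rw [Fintype.card_eq_zero_iff]
    refine ⟨fun σ => hb ?_⟩
    have := σ.2.2
    simp [layeredWalk] at this
    exact this.symm

lemma cnt2_zero (u w : Fin n) (a b : LV n t) :
    cnt2 ht G u w 0 a b
      = if a = (w, z0 ht) ∧ b = (u, z0 ht) then cardOm G t else 0 := by
  unfold cnt2 cardOm
  by_cases hb : a = (w, z0 ht) ∧ b = (u, z0 ht)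
  · rw [if_pos hb]
    apply Fintype.card_congr
    apply Equiv.subtypeEquivRight
    intro σ
    simp [layeredWalk, hb.1, hb.2, Prod.ext_iff]
  · rw [if_neg hb]
    rw [Fintype.card_eq_zero_iff]
    refine ⟨fun σ => hb ?_⟩
    have := σ.2.2
    simp only [layeredWalk] at this
    rw [Prod.mk.injEq] at this
    exact ⟨this.1.symm, this.2.symm⟩

lemma cntU_succ (hreg : G.IsRegularOfDegree Δ) (u : Fin n) {k : ℕ} (hk : k < t)
    (b : LV n t) :
    Δ * (2 * t) * cntU ht G u (k+1) b
      = ∑ b' : LV n t, (if G.Adj b'.1 b.1 then 1 else 0) * cntU ht G u k b' := by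
  have hdec : cntU ht G u (k+1) b
      = ∑ b' : LV n t, Fintype.card {σ : Sig n t //
          (lvalid G σ ∧ layeredWalk ht σ (u, z0 ht) (k+1) = b)
            ∧ layeredWalk ht σ (u, z0 ht) k = b'} :=
    fiber_decomp _ _
  rw [hdec, Finset.mul_sum]
  apply Finset.sum_congr rfl
  intro b' _
  have hcongr : Fintype.card {σ : Sig n t //
      (lvalid G σ ∧ layeredWalk ht σ (u, z0 ht) (k+1) = b)
        ∧ layeredWalk ht σ (u, z0 ht) k = b'}
      = Fintype.card {σ : Sig n t // lvalid G σ ∧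
          (layeredWalk ht σ (u, z0 ht) k = b') ∧ σ b'.1 b'.2 ⟨k, hk⟩ = b} := by
    apply Fintype.card_congr
    apply Equiv.subtypeEquivRight
    intro σ
    rw [lw_succ ht σ _ hk]
    constructor
    · rintro ⟨⟨hv, h1⟩, h2⟩
      refine ⟨hv, h2, ?_⟩
      rw [← h2]
      exact h1
    · rintro ⟨hv, h2, h1⟩
      refine ⟨⟨hv, ?_⟩, h2⟩
      rw [h2]
      exact h1
  rw [hcongr]
  exact pin1' hreg (fun σ => layeredWalk ht σ (u, z0 ht) k = b') b'.1 b'.2 ⟨k, hk⟩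
    (fun σ x => by
      show layeredWalk ht (upd σ b'.1 b'.2 ⟨k, hk⟩ x) (u, z0 ht) k = b'
        ↔ layeredWalk ht σ (u, z0 ht) k = b'
      rw [walk_upd ht σ b'.1 b'.2 ⟨k, hk⟩ x (le_refl k) _ k (le_refl k)]) b

lemma pin2 (hreg : G.IsRegularOfDegree Δ) (P : Sig n t → Prop) [DecidablePred P]
    (v₁ : Fin n) (i₁ : Fin (2 * t)) (j₁ : Fin t)
    (v₂ : Fin n) (i₂ : Fin (2 * t)) (j₂ : Fin t)
    (hne : ¬(v₂ = v₁ ∧ i₂ = i₁ ∧ j₂ = j₁))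
    (hP1 : ∀ σ x, P (upd σ v₁ i₁ j₁ x) ↔ P σ)
    (hP2 : ∀ σ x, P (upd σ v₂ i₂ j₂ x) ↔ P σ)
    (x y : LV n t) :
    Δ * (2 * t) * (Δ * (2 * t) * Fintype.card {σ : Sig n t //
        lvalid G σ ∧ P σ ∧ (σ v₁ i₁ j₁ = x ∧ σ v₂ i₂ j₂ = y)})
      = (if G.Adj v₁ x.1 then 1 else 0) * ((if G.Adj v₂ y.1 then 1 else 0)
          * Fintype.card {σ : Sig n t // lvalid G σ ∧ P σ}) := by
  have e1 : {σ : Sig n t // lvalid G σ ∧ P σ ∧ (σ v₁ i₁ j₁ = x ∧ σ v₂ i₂ j₂ = y)}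
      ≃ {σ : Sig n t // lvalid G σ ∧ (P σ ∧ σ v₂ i₂ j₂ = y) ∧ σ v₁ i₁ j₁ = x} :=
    Equiv.subtypeEquivRight (fun σ => by tauto)
  rw [Fintype.card_congr e1]
  have h1 := pin1' hreg (fun σ => P σ ∧ σ v₂ i₂ j₂ = y) v₁ i₁ j₁
      (fun σ z => by
        show P (upd σ v₁ i₁ j₁ z) ∧ upd σ v₁ i₁ j₁ z v₂ i₂ j₂ = y ↔ _
        rw [upd_other σ v₁ i₁ j₁ z hne, hP1 σ z]) x
  rw [mul_comm (Δ * (2 * t)) (Fintype.card _), ← mul_assoc, mul_comm _ (Δ * (2*t)),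
    mul_assoc]
  rw [h1]
  have h2 := pin1' hreg P v₂ i₂ j₂ hP2 y
  calc Δ * (2 * t * ((if G.Adj v₁ x.1 then 1 else 0)
        * Fintype.card {σ : Sig n t // lvalid G σ ∧ P σ ∧ σ v₂ i₂ j₂ = y}))
      = (if G.Adj v₁ x.1 then 1 else 0) * (Δ * (2 * t)
        * Fintype.card {σ : Sig n t // lvalid G σ ∧ P σ ∧ σ v₂ i₂ j₂ = y}) := by ring
    _ = _ := by rw [h2]

lemma sum_ind_fst (hreg : G.IsRegularOfDegree Δ) (ht : 0 < t) (x : Fin n) :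
    ∑ p : LV n t, (if G.Adj p.1 x then 1 else 0 : ℕ) = Δ * (2 * t) := by
  rw [Fintype.sum_prod_type]
  have : ∀ v : Fin n, ∑ _i : Fin (2 * t), (if G.Adj v x then 1 else 0 : ℕ)
      = (2 * t) * (if G.Adj v x then 1 else 0) := by
    intro v; rw [Finset.sum_const, Finset.card_univ, Fintype.card_fin, smul_eq_mul]
  simp only [this]
  rw [← Finset.mul_sum]
  have h2 : ∑ v : Fin n, (if G.Adj v x then 1 else 0 : ℕ)
      = (Finset.univ.filter (fun v => G.Adj v x)).card := by
    rw [Finset.card_filter]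
  rw [h2]
  have h3 : Finset.univ.filter (fun v => G.Adj v x) = G.neighborFinset x := by
    rw [SimpleGraph.neighborFinset_eq_filter]
    apply Finset.filter_congr
    intro v _
    simp [SimpleGraph.adj_comm]
  rw [h3, SimpleGraph.card_neighborFinset_eq_degree, hreg x]
  ring

lemma sum_ind_snd (hreg : G.IsRegularOfDegree Δ) (ht : 0 < t) (x : Fin n) :
    ∑ p : LV n t, (if G.Adj x p.1 then 1 else 0 : ℕ) = Δ * (2 * t) := by
  have : ∀ p : LV n t, (if G.Adj x p.1 then 1 else 0 : ℕ)
      = (if G.Adj p.1 x then 1 else 0) := by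
    intro p; simp [SimpleGraph.adj_comm]
  simp only [this]
  exact sum_ind_fst G hreg ht x

lemma cnt2_succ (hreg : G.IsRegularOfDegree Δ) (u w : Fin n) {k : ℕ} (hk : k < t)
    {a b : LV n t} (hab : a ≠ b) :
    Δ * (2 * t) * (Δ * (2 * t) * cnt2 ht G u w (k+1) a b)
      = ∑ p : LV n t × LV n t, (if p.1 = p.2 then 0 else
          (if G.Adj p.1.1 a.1 then 1 else 0) * ((if G.Adj p.2.1 b.1 then 1 else 0)
            * cnt2 ht G u w k p.1 p.2)) := by
  have hdec : cnt2 ht G u w (k+1) a b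
      = ∑ p : LV n t × LV n t, Fintype.card {σ : Sig n t //
          (lvalid G σ ∧ (layeredWalk ht σ (w, z0 ht) (k+1),
              layeredWalk ht σ (u, z0 ht) (k+1)) = (a, b))
            ∧ (layeredWalk ht σ (w, z0 ht) k, layeredWalk ht σ (u, z0 ht) k) = p} :=
    fiber_decomp _ _
  rw [hdec, Finset.mul_sum]
  simp only [Finset.mul_sum]
  apply Finset.sum_congr rfl
  rintro ⟨pa, pb⟩ -
  by_cases hp : pa = pb
  · rw [if_pos hp]
    have hzero : Fintype.card {σ : Sig n t //
        (lvalid G σ ∧ (layeredWalk ht σ (w, z0 ht) (k+1),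
            layeredWalk ht σ (u, z0 ht) (k+1)) = (a, b))
          ∧ (layeredWalk ht σ (w, z0 ht) k, layeredWalk ht σ (u, z0 ht) k) = (pa, pb)} = 0 := by
      rw [Fintype.card_eq_zero_iff]
      refine ⟨fun σ => hab ?_⟩
      obtain ⟨⟨hv, h1⟩, h2⟩ := σ.2
      rw [Prod.mk.injEq] at h1 h2
      calc a = layeredWalk ht σ.1 (w, z0 ht) (k+1) := h1.1.symm
        _ = σ.1 (layeredWalk ht σ.1 (w, z0 ht) k).1
              (layeredWalk ht σ.1 (w, z0 ht) k).2 ⟨k, hk⟩ := lw_succ ht _ _ hk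
        _ = σ.1 pa.1 pa.2 ⟨k, hk⟩ := by rw [h2.1]
        _ = σ.1 pb.1 pb.2 ⟨k, hk⟩ := congrArg (fun z : LV n t => σ.1 z.1 z.2 ⟨k, hk⟩) hp
        _ = σ.1 (layeredWalk ht σ.1 (u, z0 ht) k).1
              (layeredWalk ht σ.1 (u, z0 ht) k).2 ⟨k, hk⟩ := by rw [h2.2]
        _ = layeredWalk ht σ.1 (u, z0 ht) (k+1) := (lw_succ ht _ _ hk).symm
        _ = b := h1.2
    rw [hzero, mul_zero, mul_zero]
  · rw [if_neg hp]
    have hcongr : Fintype.card {σ : Sig n t //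
        (lvalid G σ ∧ (layeredWalk ht σ (w, z0 ht) (k+1),
            layeredWalk ht σ (u, z0 ht) (k+1)) = (a, b))
          ∧ (layeredWalk ht σ (w, z0 ht) k, layeredWalk ht σ (u, z0 ht) k) = (pa, pb)}
        = Fintype.card {σ : Sig n t // lvalid G σ ∧
            ((layeredWalk ht σ (w, z0 ht) k, layeredWalk ht σ (u, z0 ht) k) = (pa, pb)
              ∧ (σ pa.1 pa.2 ⟨k, hk⟩ = a ∧ σ pb.1 pb.2 ⟨k, hk⟩ = b))} := by
      apply Fintype.card_congr
      apply Equiv.subtypeEquivRight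
      intro σ
      rw [lw_succ ht _ _ hk, lw_succ ht _ _ hk]
      simp only [Prod.mk.injEq]
      constructor
      · rintro ⟨⟨hv, h1, h2⟩, h3, h4⟩
        refine ⟨hv, ⟨h3, h4⟩, ?_, ?_⟩
        · rw [← h3]; exact h1
        · rw [← h4]; exact h2
      · rintro ⟨hv, ⟨h3, h4⟩, h5, h6⟩
        refine ⟨⟨hv, ?_, ?_⟩, h3, h4⟩
        · rw [h3]; exact h5
        · rw [h4]; exact h6
    rw [hcongr]
    have hne : ¬(pb.1 = pa.1 ∧ pb.2 = pa.2 ∧ (⟨k, hk⟩ : Fin t) = ⟨k, hk⟩) := by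
      rintro ⟨h1, h2, -⟩
      exact hp (Prod.ext h1.symm h2.symm)
    have hinv : ∀ (v₀ : Fin n) (i₀ : Fin (2*t)) (σ : Sig n t) (x : LV n t),
        ((layeredWalk ht (upd σ v₀ i₀ ⟨k, hk⟩ x) (w, z0 ht) k,
          layeredWalk ht (upd σ v₀ i₀ ⟨k, hk⟩ x) (u, z0 ht) k) = (pa, pb)
        ↔ (layeredWalk ht σ (w, z0 ht) k, layeredWalk ht σ (u, z0 ht) k) = (pa, pb)) := by
      intro v₀ i₀ σ x
      rw [walk_upd ht σ v₀ i₀ ⟨k, hk⟩ x (le_refl k) _ k (le_refl k),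
        walk_upd ht σ v₀ i₀ ⟨k, hk⟩ x (le_refl k) _ k (le_refl k)]
    exact pin2 G hreg
      (fun σ => (layeredWalk ht σ (w, z0 ht) k, layeredWalk ht σ (u, z0 ht) k) = (pa, pb))
      pa.1 pa.2 ⟨k, hk⟩ pb.1 pb.2 ⟨k, hk⟩ hne
      (fun σ x => hinv pa.1 pa.2 σ x) (fun σ x => hinv pb.1 pb.2 σ x) a b

/-- Count of samples where the walks from `w` and `u` first meet going from step `k`
to step `k+1`. -/
def cntFM (u w : Fin n) (k : ℕ) : ℕ :=
  Fintype.card {σ : Sig n t // lvalid G σ ∧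
    (layeredWalk ht σ (w, z0 ht) (k+1) = layeredWalk ht σ (u, z0 ht) (k+1)
      ∧ layeredWalk ht σ (w, z0 ht) k ≠ layeredWalk ht σ (u, z0 ht) k)}

lemma cntFM_decomp (hreg : G.IsRegularOfDegree Δ) (u w : Fin n) {k : ℕ} (hk : k < t) :
    Δ * (2 * t) * (Δ * (2 * t) * cntFM ht G u w k)
      = ∑ q : (LV n t × LV n t) × LV n t, (if q.1.1 = q.1.2 then 0 else
          (if G.Adj q.1.1.1 q.2.1 then 1 else 0) * ((if G.Adj q.1.2.1 q.2.1 then 1 else 0)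
            * cnt2 ht G u w k q.1.1 q.1.2)) := by
  have hdec : cntFM ht G u w k
      = ∑ q : (LV n t × LV n t) × LV n t, Fintype.card {σ : Sig n t //
          (lvalid G σ ∧
            (layeredWalk ht σ (w, z0 ht) (k+1) = layeredWalk ht σ (u, z0 ht) (k+1)
              ∧ layeredWalk ht σ (w, z0 ht) k ≠ layeredWalk ht σ (u, z0 ht) k))
            ∧ ((layeredWalk ht σ (w, z0 ht) k, layeredWalk ht σ (u, z0 ht) k),
                layeredWalk ht σ (w, z0 ht) (k+1)) = q} :=
    fiber_decomp _ _
  rw [hdec, Finset.mul_sum]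
  simp only [Finset.mul_sum]
  apply Finset.sum_congr rfl
  rintro ⟨⟨qa, qb⟩, qx⟩ -
  by_cases hq : qa = qb
  · have hq' : (((qa, qb), qx) : (LV n t × LV n t) × LV n t).1.1
        = (((qa, qb), qx) : (LV n t × LV n t) × LV n t).1.2 := hq
    rw [if_pos hq']
    have hzero : Fintype.card {σ : Sig n t //
        (lvalid G σ ∧
          (layeredWalk ht σ (w, z0 ht) (k+1) = layeredWalk ht σ (u, z0 ht) (k+1)
            ∧ layeredWalk ht σ (w, z0 ht) k ≠ layeredWalk ht σ (u, z0 ht) k))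
          ∧ ((layeredWalk ht σ (w, z0 ht) k, layeredWalk ht σ (u, z0 ht) k),
              layeredWalk ht σ (w, z0 ht) (k+1)) = ((qa, qb), qx)} = 0 := by
      rw [Fintype.card_eq_zero_iff]
      refine ⟨fun σ => ?_⟩
      obtain ⟨⟨hv, h1, h2⟩, h3⟩ := σ.2
      simp only [Prod.mk.injEq] at h3
      exact h2 (by rw [h3.1.1, h3.1.2, hq])
    rw [hzero, mul_zero, mul_zero]
  · rw [if_neg hq]
    have hcongr : Fintype.card {σ : Sig n t //
        (lvalid G σ ∧
          (layeredWalk ht σ (w, z0 ht) (k+1) = layeredWalk ht σ (u, z0 ht) (k+1)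
            ∧ layeredWalk ht σ (w, z0 ht) k ≠ layeredWalk ht σ (u, z0 ht) k))
          ∧ ((layeredWalk ht σ (w, z0 ht) k, layeredWalk ht σ (u, z0 ht) k),
              layeredWalk ht σ (w, z0 ht) (k+1)) = ((qa, qb), qx)}
        = Fintype.card {σ : Sig n t // lvalid G σ ∧
            ((layeredWalk ht σ (w, z0 ht) k, layeredWalk ht σ (u, z0 ht) k) = (qa, qb)
              ∧ (σ qa.1 qa.2 ⟨k, hk⟩ = qx ∧ σ qb.1 qb.2 ⟨k, hk⟩ = qx))} := by
      apply Fintype.card_congr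
      apply Equiv.subtypeEquivRight
      intro σ
      rw [lw_succ ht _ _ hk, lw_succ ht _ _ hk]
      simp only [Prod.mk.injEq]
      constructor
      · rintro ⟨⟨hv, h1, h2⟩, ⟨h3, h4⟩, h5⟩
        refine ⟨hv, ⟨h3, h4⟩, ?_, ?_⟩
        · rw [← h3]; exact h5
        · rw [← h4, ← h1]; exact h5
      · rintro ⟨hv, ⟨h3, h4⟩, h5, h6⟩
        refine ⟨⟨hv, ?_, fun hc => hq ?_⟩, ⟨h3, h4⟩, ?_⟩
        · rw [h3, h4, h5, h6]
        · rw [← h3, ← h4]; exact hc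
        · rw [h3]; exact h5
    rw [hcongr]
    have hne : ¬(qb.1 = qa.1 ∧ qb.2 = qa.2 ∧ (⟨k, hk⟩ : Fin t) = ⟨k, hk⟩) := by
      rintro ⟨h1, h2, -⟩
      exact hq (Prod.ext h1.symm h2.symm)
    have hinv : ∀ (v₀ : Fin n) (i₀ : Fin (2*t)) (σ : Sig n t) (x : LV n t),
        ((layeredWalk ht (upd σ v₀ i₀ ⟨k, hk⟩ x) (w, z0 ht) k,
          layeredWalk ht (upd σ v₀ i₀ ⟨k, hk⟩ x) (u, z0 ht) k) = (qa, qb)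
        ↔ (layeredWalk ht σ (w, z0 ht) k, layeredWalk ht σ (u, z0 ht) k) = (qa, qb)) := by
      intro v₀ i₀ σ x
      rw [walk_upd ht σ v₀ i₀ ⟨k, hk⟩ x (le_refl k) _ k (le_refl k),
        walk_upd ht σ v₀ i₀ ⟨k, hk⟩ x (le_refl k) _ k (le_refl k)]
    exact pin2 G hreg
      (fun σ => (layeredWalk ht σ (w, z0 ht) k, layeredWalk ht σ (u, z0 ht) k) = (qa, qb))
      qa.1 qa.2 ⟨k, hk⟩ qb.1 qb.2 ⟨k, hk⟩ hne
      (fun σ x => hinv qa.1 qa.2 σ x) (fun σ x => hinv qb.1 qb.2 σ x) qx qx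

lemma sum_ind_vert (hreg : G.IsRegularOfDegree Δ) (x : Fin n) :
    ∑ v : Fin n, (if G.Adj v x then 1 else 0 : ℕ) = Δ := by
  have h2 : ∑ v : Fin n, (if G.Adj v x then 1 else 0 : ℕ)
      = (Finset.univ.filter (fun v => G.Adj v x)).card := by
    rw [Finset.card_filter]
  rw [h2]
  have h3 : Finset.univ.filter (fun v => G.Adj v x) = G.neighborFinset x := by
    rw [SimpleGraph.neighborFinset_eq_filter]
    apply Finset.filter_congr
    intro v _
    simp [SimpleGraph.adj_comm]
  rw [h3, SimpleGraph.card_neighborFinset_eq_degree, hreg x]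

lemma cntU_one (hreg : G.IsRegularOfDegree Δ) (u : Fin n) (b : LV n t) :
    Δ * (2 * t) * cntU ht G u 1 b
      = (if G.Adj u b.1 then 1 else 0) * cardOm G t := by
  rw [cntU_succ ht G hreg u ht b]
  rw [Finset.sum_eq_single ((u, z0 ht) : LV n t)]
  · rw [cntU_zero, if_pos rfl]
  · rintro b' - hne
    rw [cntU_zero, if_neg hne, mul_zero]
  · intro h; exact absurd (Finset.mem_univ _) h

lemma cnt2_one (hreg : G.IsRegularOfDegree Δ) (u w : Fin n) (hw : w ≠ u)
    {a b : LV n t} (hab : a ≠ b) :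
    Δ * (2 * t) * (Δ * (2 * t) * cnt2 ht G u w 1 a b)
      = (if G.Adj w a.1 then 1 else 0) * ((if G.Adj u b.1 then 1 else 0) * cardOm G t) := by
  rw [cnt2_succ ht G hreg u w ht hab]
  rw [Finset.sum_eq_single (((w, z0 ht), (u, z0 ht)) : LV n t × LV n t)]
  · have hne : ((w, z0 ht) : LV n t) ≠ (u, z0 ht) := by
      intro hcon
      exact hw (congrArg Prod.fst hcon)
    rw [if_neg hne, cnt2_zero]
    simp
  · rintro ⟨pa, pb⟩ - hne
    by_cases hpp : pa = pb
    · rw [if_pos hpp]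
    · rw [if_neg hpp, cnt2_zero]
      have hcond : ¬(pa = ((w, z0 ht) : LV n t) ∧ pb = ((u, z0 ht) : LV n t)) := by
        rintro ⟨rfl, rfl⟩
        exact hne rfl
      rw [if_neg hcond, mul_zero, mul_zero]
  · intro h; exact absurd (Finset.mem_univ _) h

lemma inv2 (hreg : G.IsRegularOfDegree Δ) (hΔ : 0 < Δ) (u : Fin n) :
    ∀ k, 1 ≤ k → k ≤ t → ∀ a b : LV n t, a ≠ b →
      2 * t * (∑ w ∈ Finset.univ.erase u, cnt2 ht G u w k a b) ≤ cntU ht G u k b := by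
  have epos : 0 < Δ * (2 * t) := by positivity
  have eepos : 0 < (Δ * (2 * t)) * (Δ * (2 * t)) := Nat.mul_pos epos epos
  intro k
  induction k with
  | zero => omega
  | succ k ih =>
    intro _hle hk1 a b hab
    refine Nat.le_of_mul_le_mul_left (c := (Δ * (2*t)) * (Δ * (2*t))) ?_ eepos
    rcases Nat.eq_zero_or_pos k with hk0 | hkpos
    · -- base case: k+1 = 1
      subst hk0
      have hL : (Δ * (2*t)) * (Δ * (2*t))
            * (2 * t * ∑ w ∈ Finset.univ.erase u, cnt2 ht G u w 1 a b)
          = 2 * t * ∑ w ∈ Finset.univ.erase u,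
              (Δ * (2*t)) * ((Δ * (2*t)) * cnt2 ht G u w 1 a b) := by
        simp only [Finset.mul_sum]
        exact Finset.sum_congr rfl (fun w _ => by ring)
      rw [hL]
      have hterm : ∀ w ∈ Finset.univ.erase u,
          (Δ * (2*t)) * ((Δ * (2*t)) * cnt2 ht G u w 1 a b)
            = (if G.Adj w a.1 then 1 else 0)
              * ((if G.Adj u b.1 then 1 else 0) * cardOm G t) :=
        fun w hw => cnt2_one ht G hreg u w (Finset.ne_of_mem_erase hw) hab
      rw [Finset.sum_congr rfl hterm]
      have hsum : ∑ w ∈ Finset.univ.erase u,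
            (if G.Adj w a.1 then 1 else 0)
              * ((if G.Adj u b.1 then 1 else 0) * cardOm G t)
          ≤ Δ * ((if G.Adj u b.1 then 1 else 0) * cardOm G t) := by
        rw [← Finset.sum_mul]
        apply Nat.mul_le_mul_right
        calc ∑ w ∈ Finset.univ.erase u, (if G.Adj w a.1 then 1 else 0 : ℕ)
            ≤ ∑ w : Fin n, (if G.Adj w a.1 then 1 else 0 : ℕ) :=
              Finset.sum_le_sum_of_subset (Finset.erase_subset _ _)
          _ = Δ := sum_ind_vert G hreg a.1
      calc 2 * t * ∑ w ∈ Finset.univ.erase u,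
            (if G.Adj w a.1 then 1 else 0)
              * ((if G.Adj u b.1 then 1 else 0) * cardOm G t)
          ≤ 2 * t * (Δ * ((if G.Adj u b.1 then 1 else 0) * cardOm G t)) :=
            Nat.mul_le_mul_left _ hsum
        _ = (Δ * (2*t)) * ((if G.Adj u b.1 then 1 else 0) * cardOm G t) := by ring
        _ = (Δ * (2*t)) * ((Δ * (2*t)) * cntU ht G u 1 b) := by
            rw [cntU_one ht G hreg u b]
        _ = (Δ * (2*t)) * (Δ * (2*t)) * cntU ht G u 1 b := by ring
    · -- inductive step
      have hk : k < t := by omega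
      have hL : (Δ * (2*t)) * (Δ * (2*t))
            * (2 * t * ∑ w ∈ Finset.univ.erase u, cnt2 ht G u w (k+1) a b)
          = 2 * t * ∑ w ∈ Finset.univ.erase u,
              (Δ * (2*t)) * ((Δ * (2*t)) * cnt2 ht G u w (k+1) a b) := by
        simp only [Finset.mul_sum]
        exact Finset.sum_congr rfl (fun w _ => by ring)
      rw [hL]
      have hterm : ∀ w ∈ Finset.univ.erase u,
          (Δ * (2*t)) * ((Δ * (2*t)) * cnt2 ht G u w (k+1) a b)
            = ∑ p : LV n t × LV n t, (if p.1 = p.2 then 0 else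
                (if G.Adj p.1.1 a.1 then 1 else 0) * ((if G.Adj p.2.1 b.1 then 1 else 0)
                  * cnt2 ht G u w k p.1 p.2)) :=
        fun w _ => cnt2_succ ht G hreg u w hk hab
      rw [Finset.sum_congr rfl hterm]
      rw [Finset.sum_comm]
      have hswap : 2 * t * ∑ p : LV n t × LV n t, ∑ w ∈ Finset.univ.erase u,
            (if p.1 = p.2 then 0 else
              (if G.Adj p.1.1 a.1 then 1 else 0) * ((if G.Adj p.2.1 b.1 then 1 else 0)
                * cnt2 ht G u w k p.1 p.2))
          = ∑ p : LV n t × LV n t, (if p.1 = p.2 then 0 else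
              (if G.Adj p.1.1 a.1 then 1 else 0) * ((if G.Adj p.2.1 b.1 then 1 else 0)
                * (2 * t * ∑ w ∈ Finset.univ.erase u, cnt2 ht G u w k p.1 p.2))) := by
        rw [Finset.mul_sum]
        apply Finset.sum_congr rfl
        rintro ⟨pa, pb⟩ -
        by_cases hpp : pa = pb
        · simp only [hpp, if_pos rfl]
          simp
        · simp only [if_neg hpp]
          rw [Finset.mul_sum]
          simp only [Finset.mul_sum]
          exact Finset.sum_congr rfl (fun w _ => by ring)
      rw [hswap]
      have hbound : ∑ p : LV n t × LV n t, (if p.1 = p.2 then 0 else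
            (if G.Adj p.1.1 a.1 then 1 else 0) * ((if G.Adj p.2.1 b.1 then 1 else 0)
              * (2 * t * ∑ w ∈ Finset.univ.erase u, cnt2 ht G u w k p.1 p.2)))
          ≤ ∑ p : LV n t × LV n t,
            (if G.Adj p.1.1 a.1 then 1 else 0) * ((if G.Adj p.2.1 b.1 then 1 else 0)
              * cntU ht G u k p.2) := by
        apply Finset.sum_le_sum
        rintro ⟨pa, pb⟩ -
        by_cases hpp : pa = pb
        · simp only [if_pos hpp]
          exact Nat.zero_le _
        · simp only [if_neg hpp]
          apply Nat.mul_le_mul_left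
          apply Nat.mul_le_mul_left
          exact ih hkpos (by omega) pa pb hpp
      refine le_trans hbound ?_
      have hfact : ∑ p : LV n t × LV n t,
            (if G.Adj p.1.1 a.1 then 1 else 0) * ((if G.Adj p.2.1 b.1 then 1 else 0)
              * cntU ht G u k p.2)
          = (∑ pa : LV n t, (if G.Adj pa.1 a.1 then 1 else 0))
            * ∑ pb : LV n t, (if G.Adj pb.1 b.1 then 1 else 0) * cntU ht G u k pb := by
        rw [Fintype.sum_prod_type, Finset.sum_mul]
        apply Finset.sum_congr rfl
        intro pa _
        rw [Finset.mul_sum]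
      rw [hfact, sum_ind_fst G hreg ht a.1]
      rw [← cntU_succ ht G hreg u hk b]
      exact le_of_eq (by ring)

lemma cntFM_zero (hreg : G.IsRegularOfDegree Δ) (u w : Fin n) (hw : w ≠ u) :
    Δ * (2*t) * ((Δ * (2*t)) * cntFM ht G u w 0)
      = ∑ x : LV n t, (if G.Adj w x.1 then 1 else 0)
          * ((if G.Adj u x.1 then 1 else 0) * cardOm G t) := by
  rw [cntFM_decomp ht G hreg u w ht]
  rw [Fintype.sum_prod_type]
  rw [Finset.sum_eq_single (((w, z0 ht), (u, z0 ht)) : LV n t × LV n t)]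
  · have hne : ((w, z0 ht) : LV n t) ≠ (u, z0 ht) := fun hcon => hw (congrArg Prod.fst hcon)
    apply Finset.sum_congr rfl
    intro x _
    rw [if_neg hne, cnt2_zero]
    simp
  · rintro ⟨pa, pb⟩ - hne
    apply Finset.sum_eq_zero
    intro x _
    by_cases hpp : pa = pb
    · rw [if_pos hpp]
    · rw [if_neg hpp, cnt2_zero]
      have hcond : ¬(pa = ((w, z0 ht) : LV n t) ∧ pb = ((u, z0 ht) : LV n t)) := by
        rintro ⟨rfl, rfl⟩
        exact hne rfl
      rw [if_neg hcond, mul_zero, mul_zero]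
  · intro h; exact absurd (Finset.mem_univ _) h

lemma cntFM_bound (hreg : G.IsRegularOfDegree Δ) (hΔ : 0 < Δ) (u : Fin n)
    {k : ℕ} (hk : k < t) :
    2 * t * (∑ w ∈ Finset.univ.erase u, cntFM ht G u w k) ≤ cardOm G t := by
  have epos : 0 < Δ * (2*t) := by positivity
  have eepos : 0 < (Δ*(2*t))*(Δ*(2*t)) := Nat.mul_pos epos epos
  refine Nat.le_of_mul_le_mul_left (c := (Δ*(2*t))*(Δ*(2*t))) ?_ eepos
  have hL : (Δ*(2*t))*(Δ*(2*t)) * (2*t*∑ w ∈ Finset.univ.erase u, cntFM ht G u w k)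
      = 2*t*∑ w ∈ Finset.univ.erase u, (Δ*(2*t))*((Δ*(2*t))*cntFM ht G u w k) := by
    simp only [Finset.mul_sum]
    exact Finset.sum_congr rfl (fun w _ => by ring)
  rw [hL]
  rcases Nat.eq_zero_or_pos k with hk0 | hkpos
  · -- k = 0
    subst hk0
    have hterm : ∀ w ∈ Finset.univ.erase u,
        (Δ*(2*t))*((Δ*(2*t))*cntFM ht G u w 0)
          = ∑ x : LV n t, (if G.Adj w x.1 then 1 else 0)
              * ((if G.Adj u x.1 then 1 else 0) * cardOm G t) :=
      fun w hw => cntFM_zero ht G hreg u w (Finset.ne_of_mem_erase hw)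
    rw [Finset.sum_congr rfl hterm, Finset.sum_comm]
    have hsum : ∑ x : LV n t, ∑ w ∈ Finset.univ.erase u,
          (if G.Adj w x.1 then 1 else 0) * ((if G.Adj u x.1 then 1 else 0) * cardOm G t)
        ≤ ∑ x : LV n t, Δ * ((if G.Adj u x.1 then 1 else 0) * cardOm G t) := by
      apply Finset.sum_le_sum
      intro x _
      rw [← Finset.sum_mul]
      apply Nat.mul_le_mul_right
      calc ∑ w ∈ Finset.univ.erase u, (if G.Adj w x.1 then 1 else 0 : ℕ)
          ≤ ∑ w : Fin n, (if G.Adj w x.1 then 1 else 0 : ℕ) :=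
            Finset.sum_le_sum_of_subset (Finset.erase_subset _ _)
        _ = Δ := sum_ind_vert G hreg x.1
    calc 2 * t * ∑ x : LV n t, ∑ w ∈ Finset.univ.erase u,
          (if G.Adj w x.1 then 1 else 0) * ((if G.Adj u x.1 then 1 else 0) * cardOm G t)
        ≤ 2 * t * ∑ x : LV n t, Δ * ((if G.Adj u x.1 then 1 else 0) * cardOm G t) :=
          Nat.mul_le_mul_left _ hsum
      _ = 2 * t * (Δ * ((∑ x : LV n t, (if G.Adj u x.1 then 1 else 0)) * cardOm G t)) := by
          simp only [Finset.mul_sum, Finset.sum_mul]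
      _ = (Δ*(2*t))*(Δ*(2*t)) * cardOm G t := by
          rw [sum_ind_snd G hreg ht u]
          ring
  · -- k ≥ 1
    have hterm : ∀ w ∈ Finset.univ.erase u,
        (Δ*(2*t))*((Δ*(2*t))*cntFM ht G u w k)
          = ∑ q : (LV n t × LV n t) × LV n t, (if q.1.1 = q.1.2 then 0 else
              (if G.Adj q.1.1.1 q.2.1 then 1 else 0) * ((if G.Adj q.1.2.1 q.2.1 then 1 else 0)
                * cnt2 ht G u w k q.1.1 q.1.2)) :=
      fun w _ => cntFM_decomp ht G hreg u w hk
    rw [Finset.sum_congr rfl hterm, Finset.sum_comm]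
    have hswap : 2 * t * ∑ q : (LV n t × LV n t) × LV n t, ∑ w ∈ Finset.univ.erase u,
          (if q.1.1 = q.1.2 then 0 else
            (if G.Adj q.1.1.1 q.2.1 then 1 else 0) * ((if G.Adj q.1.2.1 q.2.1 then 1 else 0)
              * cnt2 ht G u w k q.1.1 q.1.2))
        = ∑ q : (LV n t × LV n t) × LV n t, (if q.1.1 = q.1.2 then 0 else
            (if G.Adj q.1.1.1 q.2.1 then 1 else 0) * ((if G.Adj q.1.2.1 q.2.1 then 1 else 0)
              * (2 * t * ∑ w ∈ Finset.univ.erase u, cnt2 ht G u w k q.1.1 q.1.2))) := by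
      rw [Finset.mul_sum]
      apply Finset.sum_congr rfl
      rintro ⟨⟨qa, qb⟩, x⟩ -
      by_cases hpp : qa = qb
      · simp only [if_pos hpp]
        simp
      · simp only [if_neg hpp]
        simp only [Finset.mul_sum]
        exact Finset.sum_congr rfl (fun w _ => by ring)
    rw [hswap]
    have hbound : ∑ q : (LV n t × LV n t) × LV n t, (if q.1.1 = q.1.2 then 0 else
          (if G.Adj q.1.1.1 q.2.1 then 1 else 0) * ((if G.Adj q.1.2.1 q.2.1 then 1 else 0)
            * (2 * t * ∑ w ∈ Finset.univ.erase u, cnt2 ht G u w k q.1.1 q.1.2)))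
        ≤ ∑ q : (LV n t × LV n t) × LV n t,
          (if G.Adj q.1.1.1 q.2.1 then 1 else 0) * ((if G.Adj q.1.2.1 q.2.1 then 1 else 0)
            * cntU ht G u k q.1.2) := by
      apply Finset.sum_le_sum
      rintro ⟨⟨qa, qb⟩, x⟩ -
      by_cases hpp : qa = qb
      · simp only [if_pos hpp]
        exact Nat.zero_le _
      · simp only [if_neg hpp]
        apply Nat.mul_le_mul_left
        apply Nat.mul_le_mul_left
        exact inv2 ht G hreg hΔ u k hkpos (by omega) qa qb hpp
    refine le_trans hbound ?_
    have hfact : ∑ q : (LV n t × LV n t) × LV n t,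
          (if G.Adj q.1.1.1 q.2.1 then 1 else 0) * ((if G.Adj q.1.2.1 q.2.1 then 1 else 0)
            * cntU ht G u k q.1.2)
        = ∑ p : LV n t × LV n t, ∑ x : LV n t,
            (if G.Adj p.1.1 x.1 then 1 else 0) * ((if G.Adj p.2.1 x.1 then 1 else 0)
              * cntU ht G u k p.2) := by
      rw [Fintype.sum_prod_type]
    rw [hfact]
    apply le_of_eq
    calc ∑ p : LV n t × LV n t, ∑ x : LV n t,
          (if G.Adj p.1.1 x.1 then 1 else 0) * ((if G.Adj p.2.1 x.1 then 1 else 0)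
            * cntU ht G u k p.2)
        = ∑ pa : LV n t, ∑ pb : LV n t, ∑ x : LV n t,
            (if G.Adj pa.1 x.1 then 1 else 0) * ((if G.Adj pb.1 x.1 then 1 else 0)
              * cntU ht G u k pb) := by
          rw [Fintype.sum_prod_type]
      _ = ∑ pb : LV n t, ∑ pa : LV n t, ∑ x : LV n t,
            (if G.Adj pa.1 x.1 then 1 else 0) * ((if G.Adj pb.1 x.1 then 1 else 0)
              * cntU ht G u k pb) := Finset.sum_comm
      _ = ∑ pb : LV n t, ∑ x : LV n t, ∑ pa : LV n t,
            (if G.Adj pa.1 x.1 then 1 else 0) * ((if G.Adj pb.1 x.1 then 1 else 0)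
              * cntU ht G u k pb) :=
          Finset.sum_congr rfl (fun pb _ => Finset.sum_comm)
      _ = ∑ pb : LV n t, ∑ x : LV n t, (Δ * (2*t)) * ((if G.Adj pb.1 x.1 then 1 else 0)
              * cntU ht G u k pb) := by
          apply Finset.sum_congr rfl
          intro pb _
          apply Finset.sum_congr rfl
          intro x _
          rw [← Finset.sum_mul, sum_ind_fst G hreg ht x.1]
      _ = ∑ pb : LV n t, (Δ * (2*t)) * ((∑ x : LV n t, (if G.Adj pb.1 x.1 then 1 else 0))
              * cntU ht G u k pb) := by
          apply Finset.sum_congr rfl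
          intro pb _
          rw [← Finset.mul_sum, ← Finset.sum_mul]
      _ = ∑ pb : LV n t, (Δ * (2*t)) * ((Δ * (2*t)) * cntU ht G u k pb) := by
          apply Finset.sum_congr rfl
          intro pb _
          rw [sum_ind_snd G hreg ht pb.1]
      _ = (Δ * (2*t)) * ((Δ * (2*t)) * ∑ pb : LV n t, cntU ht G u k pb) := by
          simp only [Finset.mul_sum]
      _ = (Δ*(2*t))*(Δ*(2*t)) * cardOm G t := by
          rw [sum_cntU ht G u k]
          ring
lemma step1 (σ : Sig n t) (u : Fin n) :
    (Finset.univ.filter (fun w : Fin n => w ≠ u ∧ ∃ k ≤ t,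
        layeredWalk ht σ (w, z0 ht) k = layeredWalk ht σ (u, z0 ht) k)).card
    ≤ ∑ k ∈ Finset.range t, (Finset.univ.filter (fun w : Fin n => w ≠ u ∧
        (layeredWalk ht σ (w, z0 ht) (k+1) = layeredWalk ht σ (u, z0 ht) (k+1) ∧
        layeredWalk ht σ (w, z0 ht) k ≠ layeredWalk ht σ (u, z0 ht) k))).card := by
  classical
  rw [← Finset.card_sigma]
  apply Finset.card_le_card_of_injOn
    (fun w => if h : ∃ k, layeredWalk ht σ (w, z0 ht) k = layeredWalk ht σ (u, z0 ht) k
      then ⟨Nat.find h - 1, w⟩ else ⟨0, w⟩)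
  · intro w hw
    beta_reduce
    rw [Finset.mem_coe, Finset.mem_filter] at hw
    obtain ⟨-, hne, k0, hk0, heq⟩ := hw
    have hex : ∃ k, layeredWalk ht σ (w, z0 ht) k = layeredWalk ht σ (u, z0 ht) k :=
      ⟨k0, heq⟩
    rw [dif_pos hex]
    have hfind := Nat.find_spec hex
    have hle : Nat.find hex ≤ k0 := Nat.find_min' hex heq
    have hpos : 0 < Nat.find hex := by
      rcases Nat.eq_zero_or_pos (Nat.find hex) with h0 | h
      · exfalso
        have := Nat.find_spec hex
        rw [h0] at this
        simp only [layeredWalk] at this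
        exact hne (congrArg Prod.fst this)
      · exact h
    have hsucc : Nat.find hex - 1 + 1 = Nat.find hex := by omega
    rw [Finset.mem_coe, Finset.mem_sigma]
    constructor
    · show Nat.find hex - 1 ∈ Finset.range t
      rw [Finset.mem_range]
      omega
    · show w ∈ Finset.univ.filter (fun w' : Fin n => w' ≠ u ∧
        (layeredWalk ht σ (w', z0 ht) ((Nat.find hex - 1)+1)
            = layeredWalk ht σ (u, z0 ht) ((Nat.find hex - 1)+1) ∧
          layeredWalk ht σ (w', z0 ht) (Nat.find hex - 1)
            ≠ layeredWalk ht σ (u, z0 ht) (Nat.find hex - 1)))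
      rw [Finset.mem_filter]
      refine ⟨Finset.mem_univ _, hne, ?_, ?_⟩
      · rw [hsucc]; exact hfind
      · exact Nat.find_min hex (by omega)
  · intro w₁ h₁ w₂ h₂ heq
    by_cases hx : ∃ k, layeredWalk ht σ (w₁, z0 ht) k = layeredWalk ht σ (u, z0 ht) k <;>
      by_cases hy : ∃ k, layeredWalk ht σ (w₂, z0 ht) k = layeredWalk ht σ (u, z0 ht) k <;>
      simp only [dif_pos, dif_neg, hx, hy] at heq <;>
      exact eq_of_heq (Sigma.mk.inj_iff.mp heq).2

lemma count_sub (P : Sig n t → Prop) [DecidablePred P] :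
    ∑ σ : {σ : Sig n t // lvalid G σ}, (if P σ.1 then 1 else 0)
      = Fintype.card {σ : Sig n t // lvalid G σ ∧ P σ} := by
  rw [← Finset.card_filter]
  rw [← Fintype.card_subtype]
  exact Fintype.card_congr (Equiv.subtypeSubtypeEquivSubtypeInter (lvalid G) P)

lemma sum_filter_card (u : Fin n) {k : ℕ} :
    ∑ σ : {σ : Sig n t // lvalid G σ},
        (Finset.univ.filter (fun w : Fin n => w ≠ u ∧
          (layeredWalk ht σ.1 (w, z0 ht) (k+1) = layeredWalk ht σ.1 (u, z0 ht) (k+1) ∧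
          layeredWalk ht σ.1 (w, z0 ht) k ≠ layeredWalk ht σ.1 (u, z0 ht) k))).card
      = ∑ w ∈ Finset.univ.erase u, cntFM ht G u w k := by
  have h1 : ∀ σ : {σ : Sig n t // lvalid G σ},
      (Finset.univ.filter (fun w : Fin n => w ≠ u ∧
        (layeredWalk ht σ.1 (w, z0 ht) (k+1) = layeredWalk ht σ.1 (u, z0 ht) (k+1) ∧
        layeredWalk ht σ.1 (w, z0 ht) k ≠ layeredWalk ht σ.1 (u, z0 ht) k))).card
      = ∑ w ∈ Finset.univ.erase u, (if
          (layeredWalk ht σ.1 (w, z0 ht) (k+1) = layeredWalk ht σ.1 (u, z0 ht) (k+1) ∧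
          layeredWalk ht σ.1 (w, z0 ht) k ≠ layeredWalk ht σ.1 (u, z0 ht) k) then 1 else 0) := by
    intro σ
    rw [Finset.card_filter]
    rw [← Finset.filter_ne' Finset.univ u, Finset.sum_filter]
    apply Finset.sum_congr rfl
    intro w _
    rw [ite_and]
  rw [Finset.sum_congr rfl (fun σ _ => h1 σ), Finset.sum_comm]
  apply Finset.sum_congr rfl
  intro w _
  exact count_sub G (fun σ =>
    layeredWalk ht σ (w, z0 ht) (k+1) = layeredWalk ht σ (u, z0 ht) (k+1) ∧
    layeredWalk ht σ (w, z0 ht) k ≠ layeredWalk ht σ (u, z0 ht) k)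

lemma total_bound (hreg : G.IsRegularOfDegree Δ) (hΔ : 0 < Δ) (u : Fin n) :
    2 * ∑ σ : {σ : Sig n t // lvalid G σ},
        (Finset.univ.filter (fun w : Fin n => w ≠ u ∧ ∃ k ≤ t,
          layeredWalk ht σ.1 (w, z0 ht) k = layeredWalk ht σ.1 (u, z0 ht) k)).card
      ≤ cardOm G t := by
  refine Nat.le_of_mul_le_mul_left (c := t) ?_ ht
  have h1 : ∑ σ : {σ : Sig n t // lvalid G σ},
      (Finset.univ.filter (fun w : Fin n => w ≠ u ∧ ∃ k ≤ t,
        layeredWalk ht σ.1 (w, z0 ht) k = layeredWalk ht σ.1 (u, z0 ht) k)).card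
      ≤ ∑ k ∈ Finset.range t, ∑ w ∈ Finset.univ.erase u, cntFM ht G u w k := by
    calc ∑ σ : {σ : Sig n t // lvalid G σ},
        (Finset.univ.filter (fun w : Fin n => w ≠ u ∧ ∃ k ≤ t,
          layeredWalk ht σ.1 (w, z0 ht) k = layeredWalk ht σ.1 (u, z0 ht) k)).card
        ≤ ∑ σ : {σ : Sig n t // lvalid G σ}, ∑ k ∈ Finset.range t,
            (Finset.univ.filter (fun w : Fin n => w ≠ u ∧
              (layeredWalk ht σ.1 (w, z0 ht) (k+1) = layeredWalk ht σ.1 (u, z0 ht) (k+1) ∧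
              layeredWalk ht σ.1 (w, z0 ht) k ≠ layeredWalk ht σ.1 (u, z0 ht) k))).card :=
          Finset.sum_le_sum (fun σ _ => step1 ht σ.1 u)
      _ = ∑ k ∈ Finset.range t, ∑ σ : {σ : Sig n t // lvalid G σ},
            (Finset.univ.filter (fun w : Fin n => w ≠ u ∧
              (layeredWalk ht σ.1 (w, z0 ht) (k+1) = layeredWalk ht σ.1 (u, z0 ht) (k+1) ∧
              layeredWalk ht σ.1 (w, z0 ht) k ≠ layeredWalk ht σ.1 (u, z0 ht) k))).card :=
          Finset.sum_comm
      _ = ∑ k ∈ Finset.range t, ∑ w ∈ Finset.univ.erase u, cntFM ht G u w k :=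
          Finset.sum_congr rfl (fun k _ => sum_filter_card ht G u)
  calc t * (2 * ∑ σ : {σ : Sig n t // lvalid G σ},
        (Finset.univ.filter (fun w : Fin n => w ≠ u ∧ ∃ k ≤ t,
          layeredWalk ht σ.1 (w, z0 ht) k = layeredWalk ht σ.1 (u, z0 ht) k)).card)
      ≤ t * (2 * ∑ k ∈ Finset.range t, ∑ w ∈ Finset.univ.erase u, cntFM ht G u w k) := by
        apply Nat.mul_le_mul_left
        apply Nat.mul_le_mul_left
        exact h1
    _ = ∑ k ∈ Finset.range t, 2 * t * (∑ w ∈ Finset.univ.erase u, cntFM ht G u w k) := by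
        simp only [Finset.mul_sum]
        exact Finset.sum_congr rfl (fun k _ => Finset.sum_congr rfl (fun w _ => by ring))
    _ ≤ ∑ k ∈ Finset.range t, cardOm G t := by
        apply Finset.sum_le_sum
        intro k hk
        rw [Finset.mem_range] at hk
        exact cntFM_bound ht G hreg hΔ u hk
    _ = t * cardOm G t := by
        rw [Finset.sum_const, Finset.card_range, smul_eq_mul]

end Count

end SLP

/-- In a uniformly sampled layered subgraph of the layered graph of a `Δ`-regular graph
`G` (each vertex independently keeps one uniformly random outgoing edge — here modelled
by counting over all sampled subgraphs), for a fixed `α = (u,1,1) ∈ 𝒱₁*`: the expected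
number of paths from other vertices of `𝒱₁*` meeting the path `P_α` at some layer is at
most `1/2`, and hence with probability at least `1/2` the path `P_α` is vertex-disjoint
from all paths `P_β`, `β ≠ α ∈ 𝒱₁*`. -/
theorem sampled_layered_paths_disjoint {n Δ t : ℕ} (ht : 0 < t) (hΔ : 0 < Δ)
    (G : SimpleGraph (Fin n)) [DecidableRel G.Adj] (hreg : G.IsRegularOfDegree Δ)
    (u : Fin n) :
    (∑ σ : SampledLayered G t,
        ((Nat.card {w : Fin n // w ≠ u ∧ ∃ k ≤ t,
            layeredWalk ht σ.1 (w, ⟨0, by omega⟩) k =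
              layeredWalk ht σ.1 (u, ⟨0, by omega⟩) k}) : ℝ))
      ≤ (1 / 2) * Nat.card (SampledLayered G t) ∧
    ((Nat.card {σ : SampledLayered G t // ∀ w : Fin n, w ≠ u → ∀ k ≤ t,
        layeredWalk ht σ.1 (w, ⟨0, by omega⟩) k ≠
          layeredWalk ht σ.1 (u, ⟨0, by omega⟩) k}) : ℝ)
      ≥ (1 / 2) * Nat.card (SampledLayered G t) := by
  classical
  let e0 : {σ : SLP.Sig n t // SLP.lvalid G σ} ≃ SampledLayered G t :=
    { toFun := fun σ => ⟨σ.1, σ.2⟩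
      invFun := fun σ => ⟨σ.1, σ.2⟩
      left_inv := fun _ => rfl
      right_inv := fun _ => rfl }
  set T : ℕ := ∑ σ : {σ : SLP.Sig n t // SLP.lvalid G σ},
      (Finset.univ.filter (fun w : Fin n => w ≠ u ∧ ∃ k ≤ t,
        layeredWalk ht σ.1 (w, SLP.z0 ht) k = layeredWalk ht σ.1 (u, SLP.z0 ht) k)).card
    with hT
  have key : 2 * T ≤ SLP.cardOm G t := SLP.total_bound ht G hreg hΔ u
  have hcards : Nat.card (SampledLayered G t) = SLP.cardOm G t := by
    rw [Nat.card_eq_fintype_card]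
    exact (Fintype.card_congr e0).symm
  have hTeq : (∑ σ : SampledLayered G t, Nat.card {w : Fin n // w ≠ u ∧ ∃ k ≤ t,
      layeredWalk ht σ.1 (w, ⟨0, by omega⟩) k =
        layeredWalk ht σ.1 (u, ⟨0, by omega⟩) k}) = T := by
    rw [hT, ← Equiv.sum_comp e0 (fun σ : SampledLayered G t =>
      Nat.card {w : Fin n // w ≠ u ∧ ∃ k ≤ t,
        layeredWalk ht σ.1 (w, ⟨0, by omega⟩) k =
          layeredWalk ht σ.1 (u, ⟨0, by omega⟩) k})]
    apply Finset.sum_congr rfl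
    intro σ _
    rw [Nat.card_eq_fintype_card, Fintype.card_subtype]
    rfl
  constructor
  · have hsum : (∑ σ : SampledLayered G t,
        ((Nat.card {w : Fin n // w ≠ u ∧ ∃ k ≤ t,
            layeredWalk ht σ.1 (w, ⟨0, by omega⟩) k =
              layeredWalk ht σ.1 (u, ⟨0, by omega⟩) k}) : ℝ))
        = ((T : ℕ) : ℝ) := by
      rw [← hTeq]
      push_cast
      rfl
    rw [hsum, hcards]
    have hkey' : ((2 * T : ℕ) : ℝ) ≤ ((SLP.cardOm G t : ℕ) : ℝ) := Nat.cast_le.mpr key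
    push_cast at hkey'
    linarith
  · set P : SLP.Sig n t → Prop := fun σ => ∀ w : Fin n, w ≠ u → ∀ k ≤ t,
      layeredWalk ht σ (w, SLP.z0 ht) k ≠ layeredWalk ht σ (u, SLP.z0 ht) k with hP
    have hGood : Nat.card {σ : SampledLayered G t // ∀ w : Fin n, w ≠ u → ∀ k ≤ t,
        layeredWalk ht σ.1 (w, ⟨0, by omega⟩) k ≠
          layeredWalk ht σ.1 (u, ⟨0, by omega⟩) k}
        = Fintype.card {σ : SLP.Sig n t // SLP.lvalid G σ ∧ P σ} := by
      rw [Nat.card_eq_fintype_card]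
      exact Fintype.card_congr (Equiv.subtypeSubtypeEquivSubtypeInter (SLP.lvalid G) P)
    have hsplit : Fintype.card {σ : SLP.Sig n t // SLP.lvalid G σ ∧ P σ}
        + Fintype.card {σ : SLP.Sig n t // SLP.lvalid G σ ∧ ¬ P σ}
        = SLP.cardOm G t := by
      have h := Finset.card_filter_add_card_filter_not
        (s := Finset.univ.filter (SLP.lvalid G)) (p := P)
      rw [Finset.filter_filter, Finset.filter_filter] at h
      unfold SLP.cardOm
      rw [Fintype.card_subtype, Fintype.card_subtype, Fintype.card_subtype]
      exact h
    have hBadle : Fintype.card {σ : SLP.Sig n t // SLP.lvalid G σ ∧ ¬ P σ} ≤ T := by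
      rw [← SLP.count_sub G (fun σ => ¬ P σ), hT]
      apply Finset.sum_le_sum
      intro σ _
      by_cases hp : P σ.1
      · rw [if_neg (not_not_intro hp)]
        exact Nat.zero_le _
      · rw [if_pos hp]
        simp only [hP, not_forall, Classical.not_imp, not_not] at hp
        obtain ⟨w, hw, k, hk, heq⟩ := hp
        apply Finset.card_pos.mpr
        exact ⟨w, Finset.mem_filter.mpr ⟨Finset.mem_univ _, hw, k, hk, heq⟩⟩
    rw [hGood, hcards]
    have hfin : 2 * Fintype.card {σ : SLP.Sig n t // SLP.lvalid G σ ∧ P σ}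
        ≥ SLP.cardOm G t := by omega
    have hcast : ((SLP.cardOm G t : ℕ) : ℝ)
        ≤ ((2 * Fintype.card {σ : SLP.Sig n t // SLP.lvalid G σ ∧ P σ} : ℕ) : ℝ) :=
      Nat.cast_le.mpr hfin
    push_cast at hcast
    linarith
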